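/- A symplectic automorphism of prime order p on a Hyperkähler manifold of K3^[2]-type satisfies p ≤ 23; more precisely, since the co-invariant lattice S_φ is negative definite of rank at most 23 - 3 = 20 and of rank divisible by p - 1, one has p - 1 ≤ 20. -/

import Mathlib

open Polynomial TensorProduct in
theorem aux_stmt_12 {S : Type*} [AddCommGroup S] [Module ℤ S]
    [Module.Free ℤ S] [Module.Finite ℤ S]
    (hrk : Module.finrank ℤ S ≤ 20) (hrk0 : Module.finrank ℤ S ≠ 0)
    (p : ℕ) (hp : p.Prime)
    (φ : S ≃ₗ[ℤ] S)
    (horder : φ ^ p = 1)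
    (hfree : ∀ v : S, φ v = v → v = 0) :
    p - 1 ≤ 20 ∧ p ≤ 23 := by
  haveI : Fact p.Prime := ⟨hp⟩
  set f : Module.End ℤ S := φ.toLinearMap with hf
  have hfp : f ^ p = 1 := by
    ext v
    have h1 : (φ ^ p) v = v := by rw [horder]; rfl
    simp only [LinearEquiv.pow_apply] at h1
    simpa [Module.End.pow_apply, f] using h1
  have hinj : ∀ w : S, (f - 1) w = 0 → w = 0 := by
    intro w hw
    apply hfree
    have : f w - w = 0 := by simpa using hw
    simpa [f, sub_eq_zero] using this
  set N : Module.End ℤ S := ∑ i ∈ Finset.range p, f ^ i with hNdef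
  have hcommN : Commute N (f - 1) :=
    (Commute.sum_left _ _ _ fun i _ => (Commute.refl f).pow_left i).sub_right
      (Commute.one_right N)
  have hmul : (f - 1) * N = 0 := by
    rw [← hcommN.eq, hNdef, geom_sum_mul, hfp, sub_self]
  have hN : N = 0 := by
    ext v
    have : (f - 1) (N v) = 0 := by
      rw [← Module.End.mul_apply, hmul]; rfl
    simpa using hinj _ this
  -- base change to ℚ
  set g : Module.End ℚ (ℚ ⊗[ℤ] S) := f.baseChange ℚ with hg
  have hgsum : (∑ i ∈ Finset.range p, g ^ i) = 0 := by
    have h1 : (Module.End.baseChangeHom ℤ ℚ S) N = 0 := by rw [hN]; exact map_zero _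
    rw [hNdef, map_sum] at h1
    simp only [map_pow] at h1
    exact h1
  have hcyc : Polynomial.aeval g (Polynomial.cyclotomic p ℚ) = 0 := by
    rw [Polynomial.cyclotomic_prime]
    simpa [map_sum] using hgsum
  have hfinrk : Module.finrank ℚ (ℚ ⊗[ℤ] S) = Module.finrank ℤ S :=
    Module.finrank_baseChange
  haveI : Nontrivial (ℚ ⊗[ℤ] S) := by
    refine Module.nontrivial_of_finrank_pos (R := ℚ) ?_
    omega
  have hint : IsIntegral ℚ g :=
    ⟨Polynomial.cyclotomic p ℚ, Polynomial.cyclotomic.monic p ℚ, hcyc⟩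
  have hdvd : minpoly ℚ g ∣ Polynomial.cyclotomic p ℚ := minpoly.dvd ℚ g hcyc
  have hirr : Irreducible (Polynomial.cyclotomic p ℚ) :=
    Polynomial.cyclotomic.irreducible_rat hp.pos
  have hmono : (minpoly ℚ g).Monic := minpoly.monic hint
  have heq : minpoly ℚ g = Polynomial.cyclotomic p ℚ := by
    rcases hirr.isUnit_or_isUnit (Classical.choose_spec hdvd) with h | h
    · exact absurd h (minpoly.not_isUnit ℚ g)
    · have : Associated (minpoly ℚ g) (Polynomial.cyclotomic p ℚ) :=
        ⟨h.unit, by rw [IsUnit.unit_spec]; exact (Classical.choose_spec hdvd).symm⟩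
      exact Polynomial.eq_of_monic_of_associated hmono (Polynomial.cyclotomic.monic p ℚ) this
  have hdeg : (minpoly ℚ g).natDegree = p - 1 := by
    rw [heq, Polynomial.natDegree_cyclotomic, Nat.totient_prime hp]
  have hdvd2 : minpoly ℚ g ∣ LinearMap.charpoly g := LinearMap.minpoly_dvd_charpoly g
  have hle : (minpoly ℚ g).natDegree ≤ (LinearMap.charpoly g).natDegree :=
    Polynomial.natDegree_le_of_dvd hdvd2 (LinearMap.charpoly_monic g).ne_zero
  rw [hdeg, LinearMap.charpoly_natDegree, hfinrk] at hle
  exact ⟨by omega, by omega⟩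

/-- Let `S` stand for the co-invariant lattice `S_φ` of a symplectic automorphism
`φ` of prime order `p` on a Hyperkähler manifold of K3^[2]-type: `S` is negative
definite of rank at most `23 - 3 = 20`, nonzero, and `φ` restricts to an isometry
of order `p` of `S` acting freely on its nonzero elements (so that `S` carries a
`ℤ[ω_p]`-structure and `p - 1` divides its rank). Then `p - 1 ≤ 20`, and in
particular `p ≤ 23`. -/
theorem stmt_12 {S : Type*} [AddCommGroup S] [Module ℤ S]
    [Module.Free ℤ S] [Module.Finite ℤ S]
    (B : LinearMap.BilinForm ℤ S)
    (hneg : ∀ v : S, v ≠ 0 → B v v < 0)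
    (hrk : Module.finrank ℤ S ≤ 20) (hrk0 : Module.finrank ℤ S ≠ 0)
    (p : ℕ) (hp : p.Prime)
    (φ : S ≃ₗ[ℤ] S) (hiso : ∀ x y : S, B (φ x) (φ y) = B x y)
    (horder : φ ^ p = 1) (hφ1 : φ ≠ 1)
    (hfree : ∀ v : S, φ v = v → v = 0) :
    p - 1 ≤ 20 ∧ p ≤ 23 :=
  aux_stmt_12 hrk hrk0 p hp φ horder hfree
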